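/- Let ε be a nonzero real number and (u, v) ∈ ℝ². Set W := Cay_ε(hat(u, v, 0)) and J := (1/2)·trace(𝕀)·1 − 𝕀. Then (1/ε)·(W·J − J·Wᵀ) = hat(M1, M2, M3), where, with D = 4 + ε²(u² + v²): M1 = 2·(2·I11·u + ε·v·(I13·u + I23·v))/D, M2 = 2·(2·I22·v − ε·u·(I13·u + I23·v))/D, M3 = 2·(2·(I13·u + I23·v) + ε·(I22 − I11)·u·v)/D. -/

import Mathlib

open Matrix

set_option maxHeartbeats 1600000

noncomputable section

/-- The hat map `(u, v, w) ↦ hat(u, v, w)`. -/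
def hat3 (u v w : ℝ) : Matrix (Fin 3) (Fin 3) ℝ :=
  !![0, -w, v; w, 0, -u; -v, u, 0]

/-- The Cayley map with time step `ε`. -/
def Cay (ε : ℝ) (A : Matrix (Fin 3) (Fin 3) ℝ) : Matrix (Fin 3) (Fin 3) ℝ :=
  (1 + (ε / 2) • A) * (1 - (ε / 2) • A)⁻¹

/-- The inertia tensor of the Suslov rigid body. -/
def inertia (I11 I22 I33 I13 I23 : ℝ) : Matrix (Fin 3) (Fin 3) ℝ :=
  !![I11, 0, I13; 0, I22, I23; I13, I23, I33]

/-- The matrix `J := (1/2)·trace(𝕀)·1 − 𝕀`. -/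
def Jmat (I : Matrix (Fin 3) (Fin 3) ℝ) : Matrix (Fin 3) (Fin 3) ℝ :=
  (((1 : ℝ) / 2) * I.trace) • (1 : Matrix (Fin 3) (Fin 3) ℝ) - I

/-- Explicit form of `1 - (ε/2)•hat3 u v 0`. -/
lemma one_sub_hat (ε u v : ℝ) :
    (1 : Matrix (Fin 3) (Fin 3) ℝ) - (ε / 2) • hat3 u v 0 =
      !![1, 0, -(ε * v / 2); 0, 1, ε * u / 2; ε * v / 2, -(ε * u / 2), 1] := by
  ext i j
  fin_cases i <;> fin_cases j <;>
    simp [hat3, Matrix.one_apply] <;> ring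

lemma one_add_hat (ε u v : ℝ) :
    (1 : Matrix (Fin 3) (Fin 3) ℝ) + (ε / 2) • hat3 u v 0 =
      !![1, 0, ε * v / 2; 0, 1, -(ε * u / 2); -(ε * v / 2), ε * u / 2, 1] := by
  ext i j
  fin_cases i <;> fin_cases j <;>
    simp [hat3, Matrix.one_apply] <;> ring

/-- Explicit inverse used in the Cayley map. -/
lemma cay_inv (ε u v : ℝ) :
    (1 - (ε / 2) • hat3 u v 0)⁻¹ =
      !![(4 + ε ^ 2 * u ^ 2) / (4 + ε ^ 2 * (u ^ 2 + v ^ 2)),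
           ε ^ 2 * u * v / (4 + ε ^ 2 * (u ^ 2 + v ^ 2)),
           2 * ε * v / (4 + ε ^ 2 * (u ^ 2 + v ^ 2));
         ε ^ 2 * u * v / (4 + ε ^ 2 * (u ^ 2 + v ^ 2)),
           (4 + ε ^ 2 * v ^ 2) / (4 + ε ^ 2 * (u ^ 2 + v ^ 2)),
           -(2 * ε * u) / (4 + ε ^ 2 * (u ^ 2 + v ^ 2));
         -(2 * ε * v) / (4 + ε ^ 2 * (u ^ 2 + v ^ 2)),
           2 * ε * u / (4 + ε ^ 2 * (u ^ 2 + v ^ 2)),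
           4 / (4 + ε ^ 2 * (u ^ 2 + v ^ 2))] := by
  have hd : (4 + ε ^ 2 * (u ^ 2 + v ^ 2)) ≠ 0 := by positivity
  have hd' : (4 + ε ^ 2 * u ^ 2 + ε ^ 2 * v ^ 2) ≠ 0 := by positivity
  rw [one_sub_hat]
  apply Matrix.inv_eq_right_inv
  ext i j
  fin_cases i <;> fin_cases j <;>
    · simp [Matrix.mul_apply, Fin.sum_univ_three, Matrix.one_apply]
      field_simp [hd']
      ring

/-- Explicit form of the Cayley transform. -/
lemma cayW (ε u v : ℝ) :
    Cay ε (hat3 u v 0) =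
      !![(4 + ε ^ 2 * (u ^ 2 - v ^ 2)) / (4 + ε ^ 2 * (u ^ 2 + v ^ 2)),
           2 * ε ^ 2 * u * v / (4 + ε ^ 2 * (u ^ 2 + v ^ 2)),
           4 * ε * v / (4 + ε ^ 2 * (u ^ 2 + v ^ 2));
         2 * ε ^ 2 * u * v / (4 + ε ^ 2 * (u ^ 2 + v ^ 2)),
           (4 + ε ^ 2 * (v ^ 2 - u ^ 2)) / (4 + ε ^ 2 * (u ^ 2 + v ^ 2)),
           -(4 * ε * u) / (4 + ε ^ 2 * (u ^ 2 + v ^ 2));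
         -(4 * ε * v) / (4 + ε ^ 2 * (u ^ 2 + v ^ 2)),
           4 * ε * u / (4 + ε ^ 2 * (u ^ 2 + v ^ 2)),
           (4 - ε ^ 2 * (u ^ 2 + v ^ 2)) / (4 + ε ^ 2 * (u ^ 2 + v ^ 2))] := by
  have hd' : (4 + ε ^ 2 * u ^ 2 + ε ^ 2 * v ^ 2) ≠ 0 := by positivity
  rw [Cay, cay_inv, one_add_hat]
  ext i j
  fin_cases i <;> fin_cases j <;>
    · simp [Matrix.mul_apply, Fin.sum_univ_three]
      field_simp [hd']
      ring


/-- Explicit parametrisation of the discrete momentum of the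
Moser–Veselov type discretisation of the Suslov problem:
`(1/ε)·(W·J − J·Wᵀ) = hat(M1, M2, M3)` with `W = Cay_ε(hat(u, v, 0))`. -/
theorem suslov_momentum_locus_moser_veselov
    (I11 I22 I33 I13 I23 : ℝ) (hI11 : 0 < I11) (hI22 : 0 < I22)
    (ε : ℝ) (hε : ε ≠ 0) (u v : ℝ) :
    (1 / ε) • (Cay ε (hat3 u v 0) * Jmat (inertia I11 I22 I33 I13 I23)
        - Jmat (inertia I11 I22 I33 I13 I23) * (Cay ε (hat3 u v 0))ᵀ) =
      hat3
        (2 * (2 * I11 * u + ε * v * (I13 * u + I23 * v)) / (4 + ε ^ 2 * (u ^ 2 + v ^ 2)))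
        (2 * (2 * I22 * v - ε * u * (I13 * u + I23 * v)) / (4 + ε ^ 2 * (u ^ 2 + v ^ 2)))
        (2 * (2 * (I13 * u + I23 * v) + ε * (I22 - I11) * u * v) /
          (4 + ε ^ 2 * (u ^ 2 + v ^ 2))) := by
  have hd : (4 + ε ^ 2 * (u ^ 2 + v ^ 2)) ≠ 0 := by positivity
  have hJ : Jmat (inertia I11 I22 I33 I13 I23) =
      !![(I22 + I33 - I11) / 2, 0, -I13; 0, (I11 + I33 - I22) / 2, -I23;
         -I13, -I23, (I11 + I22 - I33) / 2] := by
    ext i j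
    fin_cases i <;> fin_cases j <;>
      simp [Jmat, inertia, Matrix.trace_fin_three, Matrix.one_apply] <;> ring
  have hd' : (4 + ε ^ 2 * u ^ 2 + ε ^ 2 * v ^ 2) ≠ 0 := by positivity
  rw [cayW, hJ]
  ext i j
  fin_cases i <;> fin_cases j <;>
    · simp only [hat3, Matrix.mul_apply, Fin.sum_univ_three, Matrix.transpose_apply,
        Matrix.smul_apply, Matrix.sub_apply, smul_eq_mul, Matrix.cons_val', Matrix.cons_val_zero,
        Matrix.cons_val_one, Matrix.head_cons, Matrix.empty_val', Matrix.cons_val_fin_one,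
        Matrix.head_fin_const, Matrix.cons_val_two, Matrix.tail_cons, Fin.isValue, Matrix.of_apply,
        Matrix.cons_val_zero', Matrix.cons_val_succ']
      field_simp [hε, hd']
      ring

end
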